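/- Let A : [0,∞) → M_d(ℝ) be a continuous family of real d×d matrices satisfying A_0 = I and A_s·A_t = A_{s+t} for all s, t ≥ 0. Then there exists a real d×d matrix B such that A_t = exp(t·B) for all t ≥ 0, where exp denotes the matrix exponential. -/

import Mathlib

noncomputable section
open Matrix
open scoped ComplexOrder
open scoped Topology

/-- A continuous one-parameter multiplicative family of real matrices on `[0,∞)`
with `A 0 = 1` is of the form `A t = exp (t • B)` for some fixed matrix `B`. -/
theorem matrix_semigroup_exp (d : ℕ) (A : ℝ → Matrix (Fin d) (Fin d) ℝ)
    (hcont : ContinuousOn A (Set.Ici 0))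
    (h0 : A 0 = 1)
    (hmul : ∀ s t : ℝ, 0 ≤ s → 0 ≤ t → A s * A t = A (s + t)) :
    ∃ B : Matrix (Fin d) (Fin d) ℝ, ∀ t : ℝ, 0 ≤ t → A t = NormedSpace.exp (t • B) := by
  classical
  letI : SeminormedRing (Matrix (Fin d) (Fin d) ℝ) := Matrix.linftyOpSemiNormedRing
  letI : NormedRing (Matrix (Fin d) (Fin d) ℝ) := Matrix.linftyOpNormedRing
  letI : NormedAlgebra ℝ (Matrix (Fin d) (Fin d) ℝ) := Matrix.linftyOpNormedAlgebra
  letI : NormedAlgebra ℚ (Matrix (Fin d) (Fin d) ℝ) :=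
    { (inferInstance : Algebra ℚ (Matrix (Fin d) (Fin d) ℝ)) with
      norm_smul_le := (NormedAlgebra.restrictScalars ℚ ℝ (Matrix (Fin d) (Fin d) ℝ)).norm_smul_le }
  -- exp has invertible strict derivative at 0
  have hd : HasStrictFDerivAt (NormedSpace.exp)
      ((ContinuousLinearEquiv.refl ℝ (Matrix (Fin d) (Fin d) ℝ) : (Matrix (Fin d) (Fin d) ℝ) ≃L[ℝ] (Matrix (Fin d) (Fin d) ℝ)) : (Matrix (Fin d) (Fin d) ℝ) →L[ℝ] (Matrix (Fin d) (Fin d) ℝ)) 0 := by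
    exact hasStrictFDerivAt_exp_zero (𝕂 := ℝ) (𝔸 := Matrix (Fin d) (Fin d) ℝ)
  set Φ := hd.toOpenPartialHomeomorph (NormedSpace.exp) with hΦ
  have hΦcoe : (Φ : (Matrix (Fin d) (Fin d) ℝ) → (Matrix (Fin d) (Fin d) ℝ)) = NormedSpace.exp := hd.toOpenPartialHomeomorph_coe
  have h0src : (0 : Matrix (Fin d) (Fin d) ℝ) ∈ Φ.source := hd.mem_toOpenPartialHomeomorph_source
  obtain ⟨r, hr0, hball⟩ := Metric.isOpen_iff.mp Φ.open_source 0 h0src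
  have h1tgt : (1 : Matrix (Fin d) (Fin d) ℝ) ∈ Φ.target := by
    have := hd.image_mem_toOpenPartialHomeomorph_target
    rwa [NormedSpace.exp_zero] at this
  have hsym1 : Φ.symm 1 = 0 := by
    have := Φ.left_inv h0src
    rwa [show Φ 0 = 1 by rw [hΦcoe]; exact NormedSpace.exp_zero] at this
  have hinj : Set.InjOn (NormedSpace.exp) Φ.source := by
    rw [← hΦcoe]; exact Φ.injOn
  -- a good neighborhood of 1
  set V : Set (Matrix (Fin d) (Fin d) ℝ) := Φ.target ∩ Φ.symm ⁻¹' Metric.ball 0 (r / 2) with hV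
  have hVmem : V ∈ 𝓝 (1 : Matrix (Fin d) (Fin d) ℝ) := by
    refine Filter.inter_mem (Φ.open_target.mem_nhds h1tgt) ?_
    have hc : ContinuousAt Φ.symm 1 := Φ.continuousAt_symm h1tgt
    have : Metric.ball (0 : Matrix (Fin d) (Fin d) ℝ) (r / 2) ∈ 𝓝 (Φ.symm 1) := by
      rw [hsym1]; exact Metric.ball_mem_nhds _ (by linarith)
    exact hc.preimage_mem_nhds this
  -- find ε > 0 with A '' [0, ε] ⊆ V
  have hA0 : A ⁻¹' V ∈ 𝓝[Set.Ici 0] (0 : ℝ) := by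
    have := hcont 0 (Set.self_mem_Ici)
    exact this (h0 ▸ hVmem)
  obtain ⟨ε, hε0, hIcc⟩ := mem_nhdsGE_iff_exists_Icc_subset.mp hA0
  set L : ℝ → (Matrix (Fin d) (Fin d) ℝ) := fun t => Φ.symm (A t) with hL
  have hmemIcc : ∀ t ∈ Set.Icc (0 : ℝ) ε, A t ∈ Φ.target ∧ ‖L t‖ < r / 2 := by
    intro t ht
    have := hIcc ht
    refine ⟨this.1, ?_⟩
    have h2 := this.2
    simpa [Metric.mem_ball, dist_zero_right] using h2
  have hexpL : ∀ t ∈ Set.Icc (0 : ℝ) ε, NormedSpace.exp (L t) = A t := by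
    intro t ht
    have := Φ.right_inv (hmemIcc t ht).1
    rwa [hΦcoe] at this
  have hLsrc : ∀ x : Matrix (Fin d) (Fin d) ℝ, ‖x‖ < r → x ∈ Φ.source := fun x hx =>
    hball (by simpa [Metric.mem_ball, dist_zero_right] using hx)
  -- membership of dyadic subdivisions
  have hdy : ∀ n : ℕ, ε / 2 ^ n ∈ Set.Icc (0 : ℝ) ε := by
    intro n
    constructor
    · positivity
    · exact div_le_self hε0.le (one_le_pow₀ one_le_two)
  -- halving : L (ε / 2^n) = (2^n)⁻¹ • L ε
  have hhalf : ∀ n : ℕ, L (ε / 2 ^ n) = ((2 : ℝ) ^ n)⁻¹ • L ε := by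
    intro n
    induction n with
    | zero => simp
    | succ n ih =>
      set x := L (ε / 2 ^ (n + 1)) with hx
      have hxmem := hmemIcc _ (hdy (n + 1))
      have hymem := hmemIcc _ (hdy n)
      have hkey : NormedSpace.exp ((2 : ℝ) • x) = A (ε / 2 ^ n) := by
        have h2 : ((2 : ℕ) : ℝ) • x = (2 : ℕ) • x := by
          rw [Nat.cast_smul_eq_nsmul]
        have : NormedSpace.exp ((2 : ℕ) • x) = NormedSpace.exp x ^ 2 := NormedSpace.exp_nsmul 2 x
        rw [show ((2:ℝ) • x) = (2 : ℕ) • x by rw [← h2]; norm_num, this,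
          hexpL _ (hdy (n + 1)), sq]
        rw [hmul _ _ (hdy (n+1)).1 (hdy (n+1)).1]
        congr 1
        ring
      have hkey2 : NormedSpace.exp (L (ε / 2 ^ n)) = A (ε / 2 ^ n) :=
        hexpL _ (hdy n)
      have heq : (2 : ℝ) • x = L (ε / 2 ^ n) := by
        refine hinj ?_ ?_ (hkey.trans hkey2.symm)
        · refine hLsrc _ ?_
          rw [norm_smul]
          have := hxmem.2
          rw [Real.norm_ofNat]
          linarith
        · exact hLsrc _ (by linarith [hymem.2])
      rw [ih] at heq
      have : x = (2 : ℝ)⁻¹ • ((2 : ℝ) ^ n)⁻¹ • L ε := by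
        rw [← heq, smul_smul, inv_mul_cancel₀ (by norm_num), one_smul]
      rw [this, smul_smul, pow_succ]
      congr 1
      rw [mul_inv]
      ring
  -- the generator
  refine ⟨ε⁻¹ • L ε, ?_⟩
  set B := ε⁻¹ • L ε with hB
  have hεne : (ε : ℝ) ≠ 0 := ne_of_gt hε0
  -- A at dyadic step
  have hstep : ∀ n : ℕ, A (ε / 2 ^ n) = NormedSpace.exp ((ε / 2 ^ n) • B) := by
    intro n
    rw [← hexpL _ (hdy n), hhalf n]
    congr 1
    rw [hB, smul_smul]
    congr 1
    field_simp
  -- A at dyadic rationals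
  have hdyadic : ∀ n k : ℕ, A (k * (ε / 2 ^ n)) =
      NormedSpace.exp ((k * (ε / 2 ^ n)) • B) := by
    intro n k
    induction k with
    | zero => simp [h0, NormedSpace.exp_zero]
    | succ k ih =>
      have hnn : (0:ℝ) ≤ k * (ε / 2 ^ n) := by positivity
      have hnn' : (0:ℝ) ≤ ε / 2 ^ n := (hdy n).1
      have : ((k : ℝ) + 1) * (ε / 2 ^ n) = k * (ε / 2 ^ n) + ε / 2 ^ n := by ring
      rw [Nat.cast_succ, this, ← hmul _ _ hnn hnn', ih, hstep n,
        add_smul]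
      exact (NormedSpace.exp_add_of_commute (((Commute.refl B).smul_left _).smul_right _)).symm
  -- density argument
  intro t ht
  set u : ℕ → ℝ := fun n => (⌊t * 2 ^ n / ε⌋₊ : ℝ) * (ε / 2 ^ n) with hu
  have hulb : ∀ n, t - ε / 2 ^ n ≤ u n := by
    intro n
    have h2n : (0:ℝ) < 2 ^ n := by positivity
    have hfl := (Nat.lt_floor_add_one (t * 2 ^ n / ε)).le
    rw [div_le_iff₀ hε0] at hfl
    have key : t ≤ ((⌊t * 2 ^ n / ε⌋₊ : ℝ) + 1) * ε / 2 ^ n := by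
      rw [le_div_iff₀ h2n]
      nlinarith
    have hun : u n = (⌊t * 2 ^ n / ε⌋₊ : ℝ) * (ε / 2 ^ n) := rfl
    rw [add_mul, one_mul, add_div] at key
    rw [hun, ← mul_div_assoc]
    linarith
  have huub : ∀ n, u n ≤ t := by
    intro n
    have hxnn : (0:ℝ) ≤ t * 2 ^ n / ε := by positivity
    have hfl := Nat.floor_le hxnn
    rw [hu]
    calc (⌊t * 2 ^ n / ε⌋₊ : ℝ) * (ε / 2 ^ n) ≤ (t * 2 ^ n / ε) * (ε / 2 ^ n) := by
          apply mul_le_mul_of_nonneg_right hfl (hdy n).1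
      _ = t := by field_simp
  have hunn : ∀ n, 0 ≤ u n := by
    intro n
    rw [hu]
    positivity
  have hulim : Filter.Tendsto u Filter.atTop (𝓝 t) := by
    have h2' : Filter.Tendsto (fun n : ℕ => ε / 2 ^ n) Filter.atTop (𝓝 0) := by
      have h2 : Filter.Tendsto (fun n : ℕ => ε * (1 / 2 : ℝ) ^ n) Filter.atTop (𝓝 (ε * 0)) :=
        (tendsto_pow_atTop_nhds_zero_of_lt_one (by norm_num) (by norm_num)).const_mul ε
      simpa [div_eq_mul_inv, ← inv_pow, one_div] using h2
    have h1 : Filter.Tendsto (fun n : ℕ => t - ε / 2 ^ n) Filter.atTop (𝓝 (t - 0)) :=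
      tendsto_const_nhds.sub h2'
    rw [sub_zero] at h1
    exact tendsto_of_tendsto_of_tendsto_of_le_of_le h1 tendsto_const_nhds hulb huub
  have hAu : ∀ n, A (u n) = NormedSpace.exp (u n • B) := by
    intro n
    rw [hu]
    exact hdyadic n _
  have hlim1 : Filter.Tendsto (fun n => A (u n)) Filter.atTop (𝓝 (A t)) := by
    refine (hcont t ht).tendsto.comp ?_
    exact tendsto_nhdsWithin_of_tendsto_nhds_of_eventually_within u hulim
      (Filter.Eventually.of_forall hunn)
  have hlim2 : Filter.Tendsto (fun n => NormedSpace.exp (u n • B)) Filter.atTop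
      (𝓝 (NormedSpace.exp (t • B))) := by
    have : Continuous (fun s : ℝ => NormedSpace.exp (s • B)) :=
      NormedSpace.exp_continuous.comp (continuous_id.smul continuous_const)
    exact (this.tendsto t).comp hulim
  refine tendsto_nhds_unique hlim1 ?_
  simp_rw [hAu]
  exact hlim2
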